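/- Let n ≥ 1 and let A be a symmetric n×n real matrix whose upper-left (n−1)×(n−1) block is diagonal, i.e. A i j = 0 whenever i ≠ j and both i, j ≠ n (the last index); no condition is imposed on the last row and column. Then for every 0 ≤ r ≤ n−1, the (n,n) entry of T_r(A) equals the r-th elementary symmetric polynomial of the n−1 diagonal entries A 1 1, …, A (n−1) (n−1). (This is the computation proving Lemma 2.2 in a principal curvature frame: the off-block entries A i n do not contribute.) -/

import Mathlib

noncomputable section

/-- `σ_i(A)`: coefficients of the characteristic polynomial
`det(λ I − A) = ∑ (−1)^i σ_i(A) λ^{n−i}`. -/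
def matSigma (n : ℕ) (A : Matrix (Fin n) (Fin n) ℝ) (i : ℕ) : ℝ :=
  (-1 : ℝ) ^ i * (Matrix.charpoly A).coeff (n - i)

/-- Newton operators `T_0 = I`, `T_r = σ_r(A)·I − T_{r−1}(A)·A`. -/
def newtonOp (n : ℕ) (A : Matrix (Fin n) (Fin n) ℝ) : ℕ → Matrix (Fin n) (Fin n) ℝ
  | 0 => 1
  | r + 1 => matSigma n A (r + 1) • (1 : Matrix (Fin n) (Fin n) ℝ) - newtonOp n A r * A

open Polynomial Finset Matrix


theorem det_arrowhead {R : Type*} [CommRing R] {ι : Type*} [Fintype ι] [DecidableEq ι]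
    (M : Matrix ι ι R) (L : ι)
    (h : ∀ i j : ι, i ≠ j → i ≠ L → j ≠ L → M i j = 0) :
    M.det = M L L * ∏ i ∈ univ.erase L, M i i
      - ∑ k ∈ univ.erase L, M L k * M k L * ∏ j ∈ (univ.erase L).erase k, M j j := by
  classical
  rw [Matrix.det_apply']
  set S : Finset (Equiv.Perm ι) :=
    insert 1 ((univ.erase L).image (fun k => Equiv.swap k L)) with hS
  have hsum : ∑ σ : Equiv.Perm ι, Equiv.Perm.sign σ * ∏ i, M (σ i) i
      = ∑ σ ∈ S, Equiv.Perm.sign σ * ∏ i, M (σ i) i := by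
    refine (Finset.sum_subset (Finset.subset_univ S) ?_).symm
    intro σ _ hσ
    have hprod : ∏ i, M (σ i) i = 0 := by
      by_contra hp
      have hne : ∀ i, M (σ i) i ≠ 0 := fun i hi =>
        hp (Finset.prod_eq_zero (Finset.mem_univ i) hi)
      have h1 : ∀ i, i ≠ L → σ i ≠ L → σ i = i := by
        intro i hi hsi
        by_contra hne'
        exact hne i (h _ _ hne' hsi hi)
      apply hσ
      by_cases hL : σ L = L
      · have : σ = 1 := by
          ext i
          by_cases hi : i = L
          · simp [hi, hL]
          · simpa using h1 i hi (fun hc => hi (σ.injective (hc.trans hL.symm)))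
        rw [this, hS]; exact Finset.mem_insert_self _ _
      · set j := σ.symm L with hj
        have hjL : j ≠ L := fun hc => hL (by
          have := congrArg σ hc
          simpa [hj] using this.symm)
        have hσj : σ j = L := by simp [hj]
        have hrest : ∀ i, i ≠ L → i ≠ j → σ i = i := by
          intro i hi hij
          refine h1 i hi (fun hc => hij ?_)
          have := congrArg σ.symm hc
          simpa [hj] using this
        have hLj : σ L = j := by
          by_contra hc
          have hj2 : σ L ≠ L := hL
          have : σ (σ L) = σ L := hrest (σ L) hj2 hc
          exact hj2 (σ.injective this)
        have : σ = Equiv.swap j L := by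
          ext i
          by_cases hi : i = L
          · simp [hi, hLj, Equiv.swap_apply_right]
          · by_cases hij : i = j
            · simp [hij, hσj, Equiv.swap_apply_left]
            · rw [hrest i hi hij, Equiv.swap_apply_of_ne_of_ne hij hi]
        rw [this, hS]
        exact Finset.mem_insert_of_mem (Finset.mem_image.mpr ⟨j, by simp [hjL], rfl⟩)
    rw [hprod, mul_zero]
  rw [hsum, hS]
  have h1ni : (1 : Equiv.Perm ι) ∉ (univ.erase L).image (fun k => Equiv.swap k L) := by
    intro hc
    obtain ⟨k, hk, hk2⟩ := Finset.mem_image.mp hc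
    have := congrArg (fun σ : Equiv.Perm ι => σ L) hk2
    simp [Equiv.swap_apply_right] at this
    exact (Finset.mem_erase.mp hk).1 this
  rw [Finset.sum_insert h1ni]
  rw [Finset.sum_image (fun k hk k' hk' hkk' => by
    have := congrArg (fun σ : Equiv.Perm ι => σ L) hkk'
    simpa [Equiv.swap_apply_right] using this)]
  have hterm1 : (Equiv.Perm.sign (1 : Equiv.Perm ι) : R) * ∏ i, M ((1 : Equiv.Perm ι) i) i
      = M L L * ∏ i ∈ univ.erase L, M i i := by
    simp [Finset.mul_prod_erase Finset.univ (fun i => M i i) (Finset.mem_univ L)]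
  rw [hterm1]
  have hterm2 : ∀ k ∈ univ.erase L,
      (Equiv.Perm.sign (Equiv.swap k L) : R) * ∏ i, M (Equiv.swap k L i) i
      = -(M L k * M k L * ∏ j ∈ (univ.erase L).erase k, M j j) := by
    intro k hk
    have hkL : k ≠ L := (Finset.mem_erase.mp hk).1
    rw [Equiv.Perm.sign_swap hkL]
    rw [← Finset.mul_prod_erase Finset.univ _ (Finset.mem_univ L)]
    rw [← Finset.mul_prod_erase (univ.erase L) _ hk]
    have hp : ∏ j ∈ (univ.erase L).erase k, M (Equiv.swap k L j) j
        = ∏ j ∈ (univ.erase L).erase k, M j j := by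
      refine Finset.prod_congr rfl fun j hj => ?_
      obtain ⟨hjk, hj2⟩ := Finset.mem_erase.mp hj
      rw [Equiv.swap_apply_of_ne_of_ne hjk (Finset.mem_erase.mp hj2).1]
    rw [hp, Equiv.swap_apply_right, Equiv.swap_apply_left]
    push_cast
    ring
  rw [Finset.sum_congr rfl hterm2]
  rw [Finset.sum_neg_distrib]
  ring


/-- elementary symmetric polynomial of the values of `f` on `s` -/
def eS {ι : Type*} [DecidableEq ι] (f : ι → ℝ) (r : ℕ) (s : Finset ι) : ℝ :=
  ∑ t ∈ s.powersetCard r, ∏ i ∈ t, f i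

/-- shifted version: `fS f r s = eS f (r-1) s` for `r ≥ 1`, and `0` for `r = 0`. -/
def fS {ι : Type*} [DecidableEq ι] (f : ι → ℝ) : ℕ → Finset ι → ℝ
  | 0, _ => 0
  | r + 1, s => eS f r s

theorem eS_zero {ι : Type*} [DecidableEq ι] (f : ι → ℝ) (s : Finset ι) : eS f 0 s = 1 := by
  simp [eS]

theorem coeff_prod_X_sub_C {ι : Type*} [DecidableEq ι] (s : Finset ι) (f : ι → ℝ) {k : ℕ}
    (h : k ≤ s.card) :
    (∏ i ∈ s, (X - C (f i))).coeff k = (-1) ^ (s.card - k) * eS f (s.card - k) s := by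
  have h1 : (∏ i ∈ s, (X - C (f i))) = ((s.val.map f).map (fun t => X - C t)).prod := by
    rw [Multiset.map_map]; rfl
  have hc : k ≤ Multiset.card (s.val.map f) := by simpa using h
  rw [h1, Multiset.prod_X_sub_C_coeff _ hc]
  rw [Multiset.card_map]
  congr 1
  rw [Finset.esymm_map_val]
  rfl

theorem natDegree_prod_X_sub_C {ι : Type*} [DecidableEq ι] (s : Finset ι) (f : ι → ℝ) :
    (∏ i ∈ s, (X - C (f i))).natDegree = s.card := by
  rw [Polynomial.natDegree_prod _ _ (fun i _ => Polynomial.X_sub_C_ne_zero (f i))]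
  simp [Polynomial.natDegree_X_sub_C]

theorem eS_erase {ι : Type*} [DecidableEq ι] (f : ι → ℝ) (r : ℕ) (s : Finset ι) (k : ι)
    (hk : k ∈ s) :
    eS f (r + 1) s = eS f (r + 1) (s.erase k) + f k * eS f r (s.erase k) := by
  conv_lhs => rw [← Finset.insert_erase hk]
  rw [eS, Finset.powersetCard_succ_insert (Finset.notMem_erase k s)]
  rw [Finset.sum_union (by
    rw [Finset.disjoint_left]
    intro t ht hti
    obtain ⟨w, hw, rfl⟩ := Finset.mem_image.mp hti
    have := (Finset.mem_powersetCard.mp ht).1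
    exact Finset.notMem_erase k s (this (Finset.mem_insert_self k w)))]
  congr 1
  rw [Finset.sum_image (fun w hw w' hw' hww' => by
    have hkw : k ∉ w := fun hc =>
      Finset.notMem_erase k s ((Finset.mem_powersetCard.mp hw).1 hc)
    have hkw' : k ∉ w' := fun hc =>
      Finset.notMem_erase k s ((Finset.mem_powersetCard.mp hw').1 hc)
    rw [← Finset.erase_insert hkw, ← Finset.erase_insert hkw', hww'])]
  rw [eS, Finset.mul_sum]
  refine Finset.sum_congr rfl fun w hw => ?_
  have hkw : k ∉ w := fun hc =>
    Finset.notMem_erase k s ((Finset.mem_powersetCard.mp hw).1 hc)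
  rw [Finset.prod_insert hkw]

theorem sigma_arrow (n : ℕ) (A : Matrix (Fin n) (Fin n) ℝ) (L : Fin n)
    (hdiag : ∀ i j : Fin n, i ≠ j → i ≠ L → j ≠ L → A i j = 0)
    (r : ℕ) (hr : r + 1 ≤ n - 1) :
    matSigma n A (r + 1) =
      eS (fun i => A i i) (r + 1) (univ.erase L)
        + A L L * eS (fun i => A i i) r (univ.erase L)
        - ∑ k ∈ univ.erase L, A L k * A k L * fS (fun i => A i i) r ((univ.erase L).erase k) := by
  classical
  have hn : r + 2 ≤ n := by omega
  set U : Finset (Fin n) := univ.erase L with hUdef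
  have hU : U.card = n - 1 := by
    rw [hUdef, Finset.card_erase_of_mem (Finset.mem_univ L), Finset.card_univ, Fintype.card_fin]
  set d : Fin n → ℝ := fun i => A i i with hd
  have hcp : Matrix.charpoly A =
      (X - C (A L L)) * ∏ i ∈ U, (X - C (d i))
        - ∑ k ∈ U, C (A L k * A k L) * ∏ j ∈ U.erase k, (X - C (d j)) := by
    rw [Matrix.charpoly, det_arrowhead _ L (fun i j hij hi hj => by
      rw [Matrix.charmatrix_apply_ne _ _ _ hij, hdiag i j hij hi hj, map_zero, neg_zero])]
    rw [Matrix.charmatrix_apply_eq]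
    refine congrArg₂ (· - ·) ?_ ?_
    · congr 1
      exact Finset.prod_congr rfl fun i _ => Matrix.charmatrix_apply_eq _ _
    · refine Finset.sum_congr rfl fun k hk => ?_
      have hkL : k ≠ L := (Finset.mem_erase.mp hk).1
      rw [Matrix.charmatrix_apply_ne _ _ _ (Ne.symm hkL), Matrix.charmatrix_apply_ne _ _ _ hkL,
        neg_mul_neg, ← Polynomial.C_mul]
      congr 1
      exact Finset.prod_congr rfl fun j _ => Matrix.charmatrix_apply_eq _ _
  set t : ℕ := n - (r + 1) with ht
  have key : ∀ k ∈ U, (∏ j ∈ U.erase k, (X - C (d j))).coeff t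
      = (-1 : ℝ) ^ (r + 1) * fS d r (U.erase k) := by
    intro k hk
    have hUk : (U.erase k).card = n - 2 := by
      rw [Finset.card_erase_of_mem hk, hU]; omega
    cases r with
    | zero =>
        have hdeg : (∏ j ∈ U.erase k, (X - C (d j))).natDegree < t := by
          rw [natDegree_prod_X_sub_C, hUk]; omega
        rw [Polynomial.coeff_eq_zero_of_natDegree_lt hdeg]
        simp [fS]
    | succ s =>
        have hts : t ≤ (U.erase k).card := by rw [hUk]; omega
        rw [coeff_prod_X_sub_C _ _ hts, hUk]
        have h1 : n - 2 - t = s := by omega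
        rw [h1, fS]
        have h2 : (-1 : ℝ) ^ (s + 1 + 1) = (-1) ^ s := by
          rw [pow_succ, pow_succ]; ring
        rw [h2]
  have hcoeff : (Matrix.charpoly A).coeff t
      = (-1 : ℝ) ^ (r + 1) * (eS d (r + 1) U + A L L * eS d r U
          - ∑ k ∈ U, A L k * A k L * fS d r (U.erase k)) := by
    rw [hcp, Polynomial.coeff_sub, sub_mul, Polynomial.coeff_sub]
    have htu : t = (n - (r + 2)) + 1 := by omega
    have hc1 : (X * ∏ i ∈ U, (X - C (d i))).coeff t = (-1 : ℝ) ^ (r + 1) * eS d (r + 1) U := by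
      rw [htu, Polynomial.coeff_X_mul]
      have h3 : n - (r + 2) ≤ U.card := by rw [hU]; omega
      rw [coeff_prod_X_sub_C _ _ h3, hU]
      have h4 : n - 1 - (n - (r + 2)) = r + 1 := by omega
      rw [h4]
    have hc2 : (C (A L L) * ∏ i ∈ U, (X - C (d i))).coeff t
        = A L L * ((-1 : ℝ) ^ r * eS d r U) := by
      rw [Polynomial.coeff_C_mul]
      have h3 : t ≤ U.card := by rw [hU]; omega
      rw [coeff_prod_X_sub_C _ _ h3, hU]
      have h4 : n - 1 - t = r := by omega
      rw [h4]
    have hc3 : (∑ k ∈ U, C (A L k * A k L) * ∏ j ∈ U.erase k, (X - C (d j))).coeff t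
        = (-1 : ℝ) ^ (r + 1) * ∑ k ∈ U, A L k * A k L * fS d r (U.erase k) := by
      rw [Polynomial.finset_sum_coeff, Finset.mul_sum]
      refine Finset.sum_congr rfl fun k hk => ?_
      rw [Polynomial.coeff_C_mul, key k hk]
      ring
    rw [hc1, hc2, hc3]
    have h5 : (-1 : ℝ) ^ r = -(-1 : ℝ) ^ (r + 1) := by rw [pow_succ]; ring
    rw [h5]
    ring
  have hms : matSigma n A (r + 1) = (-1 : ℝ) ^ (r + 1) * (Matrix.charpoly A).coeff t := rfl
  rw [hms, hcoeff, ← mul_assoc, ← mul_pow]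
  norm_num


/-- principal curvature frame computation of Lemma 2.2: if the
symmetric matrix `A` is diagonal outside its last row and column, then the `(n,n)`
entry of `T_r(A)` is the `r`-th elementary symmetric polynomial of the other
`n−1` diagonal entries. -/
theorem newtonOp_last_last (n : ℕ) (hn : 1 ≤ n)
    (A : Matrix (Fin n) (Fin n) ℝ) (hsymm : A.IsSymm)
    (last : Fin n) (hlast : (last : ℕ) = n - 1)
    (hdiag : ∀ i j : Fin n, i ≠ j → i ≠ last → j ≠ last → A i j = 0)
    (r : ℕ) (hr : r ≤ n - 1) :
    newtonOp n A r last last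
      = ∑ s ∈ Finset.powersetCard r (Finset.univ.erase last), ∏ i ∈ s, A i i := by
  classical
  set U : Finset (Fin n) := Finset.univ.erase last with hUdef
  set d : Fin n → ℝ := fun i => A i i with hd
  suffices H : ∀ r, r ≤ n - 1 →
      newtonOp n A r last last = eS d r U ∧
      ∀ k ∈ U, newtonOp n A r last k = -(A last k) * fS d r (U.erase k) by
    exact (H r hr).1
  intro r
  induction r with
  | zero =>
      intro _
      refine ⟨by simp [newtonOp, eS_zero], fun k hk => ?_⟩
      have hlk : last ≠ k := Ne.symm (Finset.mem_erase.mp hk).1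
      simp [newtonOp, Matrix.one_apply_ne hlk, fS]
  | succ r ih =>
      intro hr1
      obtain ⟨ih1, ih2⟩ := ih (by omega)
      have hsig := sigma_arrow n A last hdiag r hr1
      have hb : ∀ k : Fin n, A k last = A last k := fun k => hsymm.apply last k
      constructor
      · show (matSigma n A (r + 1) • (1 : Matrix (Fin n) (Fin n) ℝ)
            - newtonOp n A r * A) last last = _
        rw [Matrix.sub_apply, Matrix.smul_apply, Matrix.one_apply_eq, smul_eq_mul, mul_one,
          Matrix.mul_apply]
        rw [← Finset.add_sum_erase _ _ (Finset.mem_univ last), ih1]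
        have hrest : ∑ j ∈ U, newtonOp n A r last j * A j last
            = -∑ k ∈ U, A last k * A k last * fS d r (U.erase k) := by
          rw [← Finset.sum_neg_distrib]
          refine Finset.sum_congr rfl fun j hj => ?_
          rw [ih2 j hj]
          ring
        rw [hUdef] at hrest ⊢
        rw [hrest, hsig]
        ring
      · intro k hk
        have hkl : k ≠ last := (Finset.mem_erase.mp hk).1
        show (matSigma n A (r + 1) • (1 : Matrix (Fin n) (Fin n) ℝ)
            - newtonOp n A r * A) last k = _
        rw [Matrix.sub_apply, Matrix.smul_apply, Matrix.one_apply_ne (Ne.symm hkl),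
          smul_eq_mul, mul_zero, Matrix.mul_apply]
        rw [← Finset.add_sum_erase _ _ (Finset.mem_univ last), ih1]
        have hsplit : ∑ j ∈ Finset.univ.erase last, newtonOp n A r last j * A j k
            = newtonOp n A r last k * A k k := by
          rw [← Finset.add_sum_erase _ _ (show k ∈ Finset.univ.erase last from hk)]
          have hz : ∑ j ∈ (Finset.univ.erase last).erase k,
              newtonOp n A r last j * A j k = 0 := by
            refine Finset.sum_eq_zero fun j hj => ?_
            obtain ⟨hjk, hj2⟩ := Finset.mem_erase.mp hj
            rw [hdiag j k hjk (Finset.mem_erase.mp hj2).1 hkl, mul_zero]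
          rw [hz, add_zero]
        rw [hsplit, ih2 k hk]
        cases r with
        | zero =>
            rw [show fS d (0 + 1) (U.erase k) = eS d 0 (U.erase k) from rfl,
              show fS d 0 (U.erase k) = 0 from rfl, eS_zero, eS_zero]
            ring
        | succ s =>
            show 0 - (eS d (s + 1) U * A last k
              + -(A last k) * fS d (s + 1) (U.erase k) * A k k)
              = -(A last k) * fS d (s + 2) (U.erase k)
            rw [show fS d (s + 1) (U.erase k) = eS d s (U.erase k) from rfl,
              show fS d (s + 2) (U.erase k) = eS d (s + 1) (U.erase k) from rfl,
              eS_erase d s U k hk]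
            have hdk : d k = A k k := rfl
            rw [← hdk]
            ring
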